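/- Let K be a formally real field, let s > 1 be an integer, and let g ∈ K[x,y] be a polynomial of 2s-length k, i.e., g is a sum of k 2s-th powers of elements of K[x,y] but not a sum of k−1 such powers. Let r be a positive integer such that the degree of g in the variable x is strictly less than 2sr. Then the polynomial G(x,y) = g(x,y)·(y − x^r)^{2s} + 1 has 2s-length exactly k + 1 in K[x,y]. -/
import Mathlib


open MvPolynomial

open Polynomial in
private theorem ml_coeff {A : Type*} [CommRing A] [IsDomain A]
    (hA : ∀ (n : ℕ) (a : Fin n → A), (∑ i, a i ^ 2) = 0 → ∀ i, a i = 0)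
    {s : ℕ} (hs : 0 < s) {n : ℕ} (p : Fin n → Polynomial A)
    (j : Fin n) (hj : p j ≠ 0) :
    (∑ i, p i ^ (2 * s)).coeff (2 * s * (Finset.univ.sup fun i => (p i).natDegree)) ≠ 0 := by
  set D := Finset.univ.sup fun i => (p i).natDegree with hD
  have hle : ∀ i, (p i).natDegree ≤ D := fun i =>
    Finset.le_sup (f := fun i => (p i).natDegree) (Finset.mem_univ i)
  have hcoeff : ∀ i, ((p i) ^ (2 * s)).coeff (2 * s * D) = ((p i).coeff D) ^ (2 * s) := by
    intro i
    rcases lt_or_eq_of_le (hle i) with h | h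
    · rw [Polynomial.coeff_eq_zero_of_natDegree_lt, Polynomial.coeff_eq_zero_of_natDegree_lt h,
        zero_pow (by omega)]
      calc ((p i) ^ (2 * s)).natDegree ≤ 2 * s * (p i).natDegree := natDegree_pow_le
        _ < 2 * s * D := by
          exact (Nat.mul_lt_mul_left (by omega : 0 < 2*s)).mpr h
    · rw [← h, Polynomial.coeff_natDegree, Polynomial.coeff_pow_mul_natDegree]
  rw [Polynomial.finset_sum_coeff]
  simp only [hcoeff]
  intro h0
  have h2 : (∑ i, (((p i).coeff D) ^ s) ^ 2) = 0 := by
    rw [← h0]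
    exact Finset.sum_congr rfl fun i _ => by rw [← pow_mul, mul_comm s 2]
  have hall := hA n _ h2
  have hzero : ∀ i, (p i).coeff D = 0 := fun i =>
    pow_eq_zero_iff (by omega : s ≠ 0) |>.mp (hall i)
  by_cases hD0 : D = 0
  · have hj0 : (p j).natDegree = 0 := le_antisymm (hD0 ▸ hle j) (Nat.zero_le _)
    have := hzero j
    rw [hD0, ← hj0] at this
    exact (Polynomial.leadingCoeff_ne_zero.mpr hj) this
  · obtain ⟨i₀, -, hi₀⟩ := Finset.exists_mem_eq_sup Finset.univ
      ⟨j, Finset.mem_univ j⟩ (fun i => (p i).natDegree)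
    have hne : p i₀ ≠ 0 := by
      intro h
      rw [h, Polynomial.natDegree_zero] at hi₀
      exact hD0 (hD ▸ hi₀.symm ▸ rfl)
    have := hzero i₀
    rw [← hD] at hi₀
    rw [hi₀, Polynomial.coeff_natDegree] at this
    exact (Polynomial.leadingCoeff_ne_zero.mpr hne) this

section Aux
variable {K : Type*} [Field K]
  (hK : ∀ (n : ℕ) (a : Fin n → K), (∑ i, a i ^ 2) ≠ -1)

include hK in
private theorem sosK : ∀ (n : ℕ) (a : Fin n → K), (∑ i, a i ^ 2) = 0 → ∀ i, a i = 0 := by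
  intro n a h i₀
  by_contra hne
  obtain ⟨m, rfl⟩ : ∃ m, n = m + 1 := ⟨n - 1, by have := i₀.2; omega⟩
  rw [Fin.sum_univ_succAbove _ i₀] at h
  apply hK m (fun j => a (i₀.succAbove j) / a i₀)
  have : (∑ j : Fin m, a (i₀.succAbove j) ^ 2) = -(a i₀ ^ 2) := by linear_combination h
  simp only [div_pow, ← Finset.sum_div, this]
  field_simp

include hK in
private theorem natK : ∀ m : ℕ, 0 < m → (m : K) ≠ 0 := by
  intro m hm h
  obtain ⟨l, rfl⟩ : ∃ l, m = l + 1 := ⟨m - 1, by omega⟩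
  apply hK l (fun _ => 1)
  push_cast at h
  simp only [one_pow, Finset.sum_const, Finset.card_univ, Fintype.card_fin, nsmul_eq_mul, mul_one]
  linear_combination h

include hK in
private theorem sosPoly : ∀ (n : ℕ) (a : Fin n → Polynomial K),
    (∑ i, a i ^ 2) = 0 → ∀ i, a i = 0 := by
  intro n a h i
  by_contra hne
  have := ml_coeff (sosK hK) (s := 1) one_pos a i hne
  rw [show 2 * 1 = 2 from rfl] at this
  simp only [h, Polynomial.coeff_zero, ne_eq, not_true_eq_false] at this
end Aux

namespace SOSLen
open MvPolynomial

variable (K : Type*) [Field K]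

noncomputable def rhoK : MvPolynomial (Fin 1) K ≃ₐ[K] Polynomial K :=
  (MvPolynomial.finSuccEquiv K 0).trans
    (Polynomial.mapAlgEquiv (MvPolynomial.isEmptyAlgEquiv K (Fin 0)))

noncomputable def E1 : MvPolynomial (Fin 2) K ≃ₐ[K] Polynomial (Polynomial K) :=
  (MvPolynomial.finSuccEquiv K 1).trans (Polynomial.mapAlgEquiv (rhoK K))

noncomputable def E2 : MvPolynomial (Fin 2) K ≃ₐ[K] Polynomial (Polynomial K) :=
  (MvPolynomial.renameEquiv K (Equiv.swap (0 : Fin 2) 1)).trans (E1 K)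

lemma rhoK_natDegree (q : MvPolynomial (Fin 1) K) :
    (rhoK K q).natDegree = q.degreeOf 0 := by
  rw [rhoK]
  show (Polynomial.map _ (MvPolynomial.finSuccEquiv K 0 q)).natDegree = _
  rw [Polynomial.natDegree_map_eq_of_injective (AlgEquiv.injective _),
    MvPolynomial.natDegree_finSuccEquiv]

lemma rhoK_X : rhoK K (X 0) = Polynomial.X := by
  rw [rhoK]
  show Polynomial.map _ (MvPolynomial.finSuccEquiv K 0 (X 0)) = _
  rw [MvPolynomial.finSuccEquiv_X_zero, Polynomial.map_X]

lemma E1_natDegree (p : MvPolynomial (Fin 2) K) :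
    (E1 K p).natDegree = p.degreeOf 0 := by
  rw [E1]
  show (Polynomial.map _ (MvPolynomial.finSuccEquiv K 1 p)).natDegree = _
  rw [Polynomial.natDegree_map_eq_of_injective (AlgEquiv.injective _),
    MvPolynomial.natDegree_finSuccEquiv]

lemma E1_X0 : E1 K (X 0) = Polynomial.X := by
  rw [E1]
  show Polynomial.map _ (MvPolynomial.finSuccEquiv K 1 (X 0)) = _
  rw [MvPolynomial.finSuccEquiv_X_zero, Polynomial.map_X]

lemma E1_X1 : E1 K (X 1) = Polynomial.C Polynomial.X := by
  rw [E1]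
  show Polynomial.map _ (MvPolynomial.finSuccEquiv K 1 (X 1)) = _
  rw [show (1 : Fin 2) = (0 : Fin 1).succ from rfl, MvPolynomial.finSuccEquiv_X_succ,
    Polynomial.map_C]
  exact congrArg _ (rhoK_X K)

end SOSLen

namespace SOSLen
open MvPolynomial
variable (K : Type*) [Field K]

lemma E2_X0 : E2 K (X 0) = Polynomial.C Polynomial.X := by
  rw [E2]
  show E1 K (MvPolynomial.rename _ (X 0)) = _
  rw [MvPolynomial.rename_X, Equiv.swap_apply_left, E1_X1]

lemma E2_X1 : E2 K (X 1) = Polynomial.X := by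
  rw [E2]
  show E1 K (MvPolynomial.rename _ (X 1)) = _
  rw [MvPolynomial.rename_X, Equiv.swap_apply_right, E1_X0]

lemma E2_apply (p : MvPolynomial (Fin 2) K) :
    E2 K p = Polynomial.map ((rhoK K).toAlgHom.toRingHom)
      (MvPolynomial.finSuccEquiv K 1
        (MvPolynomial.rename (Equiv.swap (0 : Fin 2) 1) p)) := rfl

lemma E2_coeff_natDegree (p : MvPolynomial (Fin 2) K) (b : ℕ) :
    ((E2 K p).coeff b).natDegree ≤ p.degreeOf 0 := by
  rw [E2_apply, Polynomial.coeff_map]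
  rw [show ∀ x, (rhoK K).toAlgHom.toRingHom x = rhoK K x from fun _ => rfl]
  have h1 : (((rhoK K) ((MvPolynomial.finSuccEquiv K 1
      (MvPolynomial.rename (Equiv.swap (0 : Fin 2) 1) p)).coeff b))).natDegree
      = _ := rhoK_natDegree K _
  refine h1.trans_le ?_
  refine (MvPolynomial.degreeOf_coeff_finSuccEquiv _ 0 b).trans ?_
  rw [show ((0 : Fin 1).succ) = (1 : Fin 2) from rfl]
  have h2 := MvPolynomial.degreeOf_rename_of_injective
    (p := p) (Equiv.injective (Equiv.swap (0 : Fin 2) 1)) 0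
  rw [Equiv.swap_apply_left] at h2
  exact h2.le

end SOSLen

namespace SOSLen
open MvPolynomial
variable (K : Type*) [Field K] (r : ℕ)

noncomputable def phi : MvPolynomial (Fin 2) K →+* Polynomial K :=
  (Polynomial.evalRingHom (Polynomial.X ^ r)).comp (E2 K).toAlgHom.toRingHom

lemma phi_apply (p : MvPolynomial (Fin 2) K) :
    phi K r p = (E2 K p).eval (Polynomial.X ^ r) := rfl

lemma phi_C (a : K) : phi K r (C a) = Polynomial.C a := by
  rw [phi_apply]
  have : E2 K (C a) = Polynomial.C (Polynomial.C a) := by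
    have h1 : (C a : MvPolynomial (Fin 2) K) = algebraMap K _ a := rfl
    rw [h1, AlgEquiv.commutes, Polynomial.algebraMap_apply, Polynomial.algebraMap_apply,
      Algebra.algebraMap_self, RingHom.id_apply]
  rw [this, Polynomial.eval_C]

lemma E2_t : E2 K (X 1 - X 0 ^ r) =
    Polynomial.X - Polynomial.C (Polynomial.X ^ r) := by
  rw [map_sub, map_pow, E2_X1, E2_X0, ← map_pow]

lemma E1_t : E1 K (X 1 - X 0 ^ r) =
    Polynomial.C Polynomial.X - Polynomial.X ^ r := by
  rw [map_sub, map_pow, E1_X1, E1_X0]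

lemma phi_t : phi K r (X 1 - X 0 ^ r) = 0 := by
  rw [phi_apply, E2_t]
  simp

lemma t_ne_zero (hr : 0 < r) : (X 1 - X 0 ^ r : MvPolynomial (Fin 2) K) ≠ 0 := by
  intro h
  have := E1_t K r
  rw [h, map_zero] at this
  have h2 : (Polynomial.X ^ r - Polynomial.C Polynomial.X : Polynomial (Polynomial K)) ≠ 0 :=
    Polynomial.X_pow_sub_C_ne_zero hr _
  apply h2
  rw [← neg_sub, ← this, neg_zero]

lemma degreeOf_t (hr : 0 < r) :
    (X 1 - X 0 ^ r : MvPolynomial (Fin 2) K).degreeOf 0 = r := by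
  rw [← E1_natDegree, E1_t, ← neg_sub, Polynomial.natDegree_neg,
    Polynomial.natDegree_X_pow_sub_C]

lemma dvd_of_phi_zero (w : MvPolynomial (Fin 2) K) (h : phi K r w = 0) :
    (X 1 - X 0 ^ r : MvPolynomial (Fin 2) K) ∣ w := by
  have hdvd := Polynomial.X_sub_C_dvd_sub_C_eval
    (a := (Polynomial.X ^ r : Polynomial K)) (p := E2 K w)
  rw [show (E2 K w).eval (Polynomial.X ^ r) = phi K r w from rfl, h, map_zero, sub_zero,
    ← E2_t K r] at hdvd
  rcases hdvd with ⟨c, hc⟩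
  exact ⟨(E2 K).symm c, by
    apply (E2 K).injective
    rw [map_mul, AlgEquiv.apply_symm_apply, hc]⟩

lemma eq_zero_of_tdvd (hr : 0 < r) (w : MvPolynomial (Fin 2) K)
    (h1 : (X 1 - X 0 ^ r : MvPolynomial (Fin 2) K) ∣ w) (h2 : w.degreeOf 0 < r) : w = 0 := by
  obtain ⟨v, rfl⟩ := h1
  rcases eq_or_ne v 0 with rfl | hv
  · exact mul_zero _
  exfalso
  have hE : ((X 1 - X 0 ^ r : MvPolynomial (Fin 2) K) * v).degreeOf 0
      = r + (E1 K v).natDegree := by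
    rw [← E1_natDegree, map_mul, Polynomial.natDegree_mul, E1_natDegree, degreeOf_t K r hr]
    · exact fun h => t_ne_zero K r hr (EmbeddingLike.map_eq_zero_iff.mp h)
    · exact fun h => hv (EmbeddingLike.map_eq_zero_iff.mp h)
  omega

lemma E1_C (a : K) : E1 K (C a) = Polynomial.C (Polynomial.C a) := by
  have h1 : (C a : MvPolynomial (Fin 2) K) = algebraMap K _ a := rfl
  rw [h1, AlgEquiv.commutes, Polynomial.algebraMap_apply, Polynomial.algebraMap_apply,
    Algebra.algebraMap_self, RingHom.id_apply]

end SOSLen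

open SOSLen

/-- Let `K` be a formally real field, `s > 1`, and `g ∈ K[x,y]` of `2s`-length `k`
(a sum of `k` `2s`-th powers but not of `k-1`). If `r > 0` and `deg_x g < 2sr`, then
`G = g·(y - x^r)^{2s} + 1` has `2s`-length exactly `k + 1`. -/
theorem length_of_G {K : Type*} [Field K]
    (hK : ∀ (n : ℕ) (a : Fin n → K), (∑ i, a i ^ 2) ≠ -1)
    (s : ℕ) (hs : 1 < s)
    (g : MvPolynomial (Fin 2) K) (k : ℕ)
    (hgk : ∃ f : Fin k → MvPolynomial (Fin 2) K, g = ∑ i, f i ^ (2 * s))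
    (hgk' : ¬ ∃ f : Fin (k - 1) → MvPolynomial (Fin 2) K, g = ∑ i, f i ^ (2 * s))
    (r : ℕ) (hr : 0 < r)
    (hdeg : g.degreeOf 0 < 2 * s * r) :
    (∃ f : Fin (k + 1) → MvPolynomial (Fin 2) K,
        g * (X 1 - X 0 ^ r) ^ (2 * s) + 1 = ∑ i, f i ^ (2 * s)) ∧
      ¬ ∃ f : Fin k → MvPolynomial (Fin 2) K,
        g * (X 1 - X 0 ^ r) ^ (2 * s) + 1 = ∑ i, f i ^ (2 * s) := by
  classical
  set t : MvPolynomial (Fin 2) K := X 1 - X 0 ^ r with hT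
  constructor
  · obtain ⟨f, hf⟩ := hgk
    refine ⟨Fin.snoc (fun i => f i * t) 1, ?_⟩
    rw [Fin.sum_univ_castSucc]
    simp only [Fin.snoc_castSucc, Fin.snoc_last, one_pow, mul_pow, ← Finset.sum_mul, ← hf]
  · rintro ⟨f, hf⟩
    have hg0 : g ≠ 0 := by
      rintro rfl
      exact hgk' ⟨fun _ => 0, by simp [zero_pow (show 2 * s ≠ 0 by omega)]⟩
    obtain ⟨m, rfl⟩ : ∃ m, k = m + 1 := by
      refine ⟨k - 1, ?_⟩
      rcases Nat.eq_zero_or_pos k with rfl | h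
      · exact absurd (by simpa using hgk.choose_spec) hg0
      · omega
    rw [show m + 1 - 1 = m from rfl] at hgk'
    have ht0 : t ≠ 0 := t_ne_zero K r hr
    set φ := phi K r with hφdef
    have hφt : φ t = 0 := phi_t K r
    have hsosK := sosK hK
    have hsosP := sosPoly hK
    have hnatK := natK hK
    have hsum1 : (∑ i, φ (f i) ^ (2 * s)) = 1 := by
      have h0 := congrArg φ hf
      rw [map_add, map_mul, map_pow, hφt, zero_pow (show 2 * s ≠ 0 by omega), mul_zero,
        map_one, zero_add, map_sum] at h0
      simp only [map_pow] at h0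
      exact h0.symm
    -- the substituted polynomials are constants
    have hex : ∃ j, φ (f j) ≠ 0 := by
      by_contra hc
      push_neg at hc
      rw [Finset.sum_eq_zero (fun i _ => by
        rw [hc i, zero_pow (show 2 * s ≠ 0 by omega)])] at hsum1
      exact zero_ne_one hsum1
    obtain ⟨j0, hj0⟩ := hex
    have hDzero : (Finset.univ.sup fun i => (φ (f i)).natDegree) = 0 := by
      by_contra hD
      have hml := ml_coeff hsosK (show 0 < s by omega) (fun i => φ (f i)) j0 hj0
      rw [hsum1] at hml
      apply hml
      rw [Polynomial.coeff_one, if_neg]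
      intro h
      rcases Nat.mul_eq_zero.mp h with h1 | h1
      · omega
      · exact hD h1
    have hdeg0 : ∀ i, (φ (f i)).natDegree = 0 := fun i =>
      Nat.le_zero.mp (hDzero ▸ Finset.le_sup (f := fun i => (φ (f i)).natDegree)
        (Finset.mem_univ i))
    set c : Fin (m + 1) → K := fun i => (φ (f i)).coeff 0 with hcdef
    have hfc : ∀ i, φ (f i) = Polynomial.C (c i) := fun i =>
      Polynomial.eq_C_of_natDegree_eq_zero (hdeg0 i)
    have hsumc : (∑ i, c i ^ (2 * s)) = 1 := by
      apply Polynomial.C_injective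
      rw [map_sum, map_one]
      simp only [map_pow]
      simp only [← hfc]
      exact hsum1
    -- x-degree bounds
    have hE1g0 : E1 K g ≠ 0 := fun h => hg0 (EmbeddingLike.map_eq_zero_iff.mp h)
    have hE1t0 : E1 K t ≠ 0 := fun h => ht0 (EmbeddingLike.map_eq_zero_iff.mp h)
    have hE1f := congrArg (E1 K) hf
    rw [map_add, map_mul, map_pow, map_one, map_sum] at hE1f
    simp only [map_pow] at hE1f
    have h1 : (E1 K g * (E1 K t) ^ (2 * s)).natDegree = g.degreeOf 0 + 2 * s * r := by
      rw [Polynomial.natDegree_mul hE1g0 (pow_ne_zero _ hE1t0), Polynomial.natDegree_pow,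
        E1_natDegree, E1_natDegree, hT, degreeOf_t K r hr]
    have hRdeg : (E1 K g * (E1 K t) ^ (2 * s) + 1).natDegree = g.degreeOf 0 + 2 * s * r := by
      rw [Polynomial.natDegree_add_eq_left_of_natDegree_lt, h1]
      rw [h1, Polynomial.natDegree_one]
      have : 0 < 2 * s * r := by positivity
      omega
    have hexE : ∃ j, E1 K (f j) ≠ 0 := by
      by_contra hc
      push_neg at hc
      rw [Finset.sum_eq_zero (fun i _ => by
        rw [hc i, zero_pow (show 2 * s ≠ 0 by omega)])] at hE1f
      rw [hE1f, Polynomial.natDegree_zero] at hRdeg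
      have : 0 < 2 * s * r := by positivity
      omega
    obtain ⟨j1, hj1⟩ := hexE
    have hdf : ∀ i, (f i).degreeOf 0 < 2 * r := by
      have hml := ml_coeff hsosP (show 0 < s by omega) (fun i => E1 K (f i)) j1 hj1
      rw [← hE1f] at hml
      have hD2 := Polynomial.le_natDegree_of_ne_zero hml
      rw [hRdeg] at hD2
      replace hD2 : 2 * s * (Finset.univ.sup fun i => (E1 K (f i)).natDegree)
          ≤ g.degreeOf 0 + 2 * s * r := hD2
      have h4 : 2 * s * (Finset.univ.sup fun i => (E1 K (f i)).natDegree) < 2 * s * (2 * r) := by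
        have h5 : 2 * s * (2 * r) = 2 * s * r + 2 * s * r := by ring
        omega
      have h6 := Nat.lt_of_mul_lt_mul_left h4
      intro i
      have h7 : (E1 K (f i)).natDegree ≤ _ :=
        Finset.le_sup (f := fun i => (E1 K (f i)).natDegree) (Finset.mem_univ i)
      rw [E1_natDegree] at h7
      omega
    -- decomposition f i = t * u i + C (c i)
    have hdvd : ∀ i, t ∣ (f i - C (c i)) := by
      intro i
      apply dvd_of_phi_zero
      rw [map_sub, ← hφdef, phi_C, hfc i, sub_self]
    choose u hu using hdvd
    have hfu : ∀ i, f i = t * u i + C (c i) := fun i => by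
      have := hu i; linear_combination this
    have hdu : ∀ i, (u i).degreeOf 0 < r := by
      intro i
      rcases eq_or_ne (u i) 0 with h | h
      · rw [h, degreeOf_zero]; omega
      · have hb : (t * u i).degreeOf 0 < 2 * r := by
          rw [← hu i, ← E1_natDegree, map_sub, E1_C]
          refine lt_of_le_of_lt (Polynomial.natDegree_sub_le _ _) ?_
          rw [Polynomial.natDegree_C]
          rw [E1_natDegree]
          exact max_lt (hdf i) (by omega)
        have heq : (t * u i).degreeOf 0 = r + (u i).degreeOf 0 := by
          rw [← E1_natDegree, map_mul,
            Polynomial.natDegree_mul hE1t0 (fun hh => h (EmbeddingLike.map_eq_zero_iff.mp hh)),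
            E1_natDegree, E1_natDegree, hT, degreeOf_t K r hr]
        omega
    -- first geometric expansion
    set Pg : Fin (m + 1) → MvPolynomial (Fin 2) K :=
      fun i => ∑ j ∈ Finset.range (2 * s), f i ^ j * C (c i) ^ (2 * s - 1 - j) with hPgdef
    have hgeom : ∀ i, f i ^ (2 * s) - C (c i) ^ (2 * s) = Pg i * (t * u i) := by
      intro i
      rw [← geom_sum₂_mul (f i) (C (c i)) (2 * s), hu i]
    have hsumCc : (∑ i, (C (c i) : MvPolynomial (Fin 2) K) ^ (2 * s)) = 1 := by
      calc (∑ i, (C (c i) : MvPolynomial (Fin 2) K) ^ (2 * s))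
          = C (∑ i, c i ^ (2 * s)) := by rw [map_sum]; simp only [map_pow]
        _ = 1 := by rw [hsumc, map_one]
    have hstep1 : g * t ^ (2 * s) = t * (∑ i, Pg i * u i) := by
      have ha : (∑ i, f i ^ (2 * s)) - 1 = g * t ^ (2 * s) := by rw [← hf]; ring
      rw [← ha, ← hsumCc, ← Finset.sum_sub_distrib,
        Finset.sum_congr rfl (fun i _ => hgeom i), Finset.mul_sum]
      exact Finset.sum_congr rfl (fun i _ => by ring)
    have hstep1' : g * t ^ (2 * s - 1) = ∑ i, Pg i * u i := by
      apply mul_left_cancel₀ ht0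
      calc t * (g * t ^ (2 * s - 1)) = g * t ^ (2 * s - 1 + 1) := by rw [pow_succ]; ring
        _ = g * t ^ (2 * s) := by rw [show 2 * s - 1 + 1 = 2 * s from by omega]
        _ = t * (∑ i, Pg i * u i) := hstep1
    have hφPg : ∀ i, φ (Pg i) = (2 * s) • (Polynomial.C (c i)) ^ (2 * s - 1) := by
      intro i
      calc φ (Pg i) = ∑ j ∈ Finset.range (2 * s), (Polynomial.C (c i)) ^ (2 * s - 1) := by
            simp only [hPgdef, map_sum]
            refine Finset.sum_congr rfl (fun j hj => ?_)
            rw [map_mul, map_pow, map_pow, hfc i, hφdef, phi_C, ← pow_add]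
            congr 1
            have := Finset.mem_range.mp hj
            omega
        _ = (2 * s) • (Polynomial.C (c i)) ^ (2 * s - 1) := by
            rw [Finset.sum_const, Finset.card_range]
    have hφQ := congrArg φ hstep1'
    rw [map_mul, map_pow, hφt, zero_pow (show 2 * s - 1 ≠ 0 by omega), mul_zero,
      map_sum] at hφQ
    have hS1φ : (∑ i, (Polynomial.C (c i)) ^ (2 * s - 1) * φ (u i)) = 0 := by
      have h3 : (0 : Polynomial K)
          = (2 * s) • ∑ i, (Polynomial.C (c i)) ^ (2 * s - 1) * φ (u i) := by
        calc (0 : Polynomial K) = ∑ i, φ (Pg i * u i) := hφQ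
          _ = ∑ i, (2 * s) • ((Polynomial.C (c i)) ^ (2 * s - 1) * φ (u i)) := by
              refine Finset.sum_congr rfl (fun i _ => ?_)
              rw [map_mul, hφPg i, smul_mul_assoc]
          _ = (2 * s) • ∑ i, (Polynomial.C (c i)) ^ (2 * s - 1) * φ (u i) :=
              (Finset.smul_sum).symm
      have h4 : ((2 * s : ℕ) : Polynomial K)
          * (∑ i, (Polynomial.C (c i)) ^ (2 * s - 1) * φ (u i)) = 0 := by
        rw [← nsmul_eq_mul, ← h3]
      rcases mul_eq_zero.mp h4 with h5 | h5
      · exfalso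
        rw [← map_natCast (Polynomial.C : K →+* Polynomial K)] at h5
        exact hnatK (2 * s) (by omega) (Polynomial.C_eq_zero.mp h5)
      · exact h5
    set S1 := ∑ i, (C (c i) : MvPolynomial (Fin 2) K) ^ (2 * s - 1) * u i with hS1def
    have hφS1 : φ S1 = 0 := by
      simp only [hS1def, map_sum, map_mul, map_pow, hφdef, phi_C]
      exact hS1φ
    have hS1deg : S1.degreeOf 0 < r := by
      rw [← E1_natDegree]
      have hle : (E1 K S1).natDegree ≤ r - 1 := by
        simp only [hS1def, map_sum, map_mul, map_pow, E1_C]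
        apply Polynomial.natDegree_sum_le_of_forall_le
        intro i _
        refine (Polynomial.natDegree_mul_le).trans ?_
        have hC0 : ((Polynomial.C (Polynomial.C (c i))) ^ (2 * s - 1)
            : Polynomial (Polynomial K)).natDegree = 0 := by
          rw [Polynomial.natDegree_pow, Polynomial.natDegree_C, Nat.mul_zero]
        rw [hC0, E1_natDegree]
        have := hdu i
        omega
      omega
    have hS1 : S1 = 0 := eq_zero_of_tdvd K r hr S1 (dvd_of_phi_zero K r S1 hφS1) hS1deg
    -- second geometric expansion
    set Rg : Fin (m + 1) → ℕ → MvPolynomial (Fin 2) K :=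
      fun i j => ∑ l ∈ Finset.range j, f i ^ l * C (c i) ^ (j - 1 - l) with hRgdef
    have hfj : ∀ i j, f i ^ j = C (c i) ^ j + (t * u i) * Rg i j := by
      intro i j
      have hg2 := geom_sum₂_mul (f i) (C (c i)) j
      rw [hu i] at hg2
      simp only [hRgdef]
      linear_combination -hg2
    set W : Fin (m + 1) → MvPolynomial (Fin 2) K :=
      fun i => ∑ j ∈ Finset.range (2 * s), Rg i j * C (c i) ^ (2 * s - 1 - j) with hWdef
    have hPg2 : ∀ i, Pg i = (2 * s) • (C (c i) : MvPolynomial (Fin 2) K) ^ (2 * s - 1)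
        + t * (u i * W i) := by
      intro i
      simp only [hPgdef]
      calc (∑ j ∈ Finset.range (2 * s), f i ^ j * C (c i) ^ (2 * s - 1 - j))
          = ∑ j ∈ Finset.range (2 * s), ((C (c i) : MvPolynomial (Fin 2) K) ^ (2 * s - 1)
              + (t * u i) * (Rg i j * C (c i) ^ (2 * s - 1 - j))) := by
            refine Finset.sum_congr rfl (fun j hj => ?_)
            rw [hfj i j, add_mul, ← pow_add,
              show j + (2 * s - 1 - j) = 2 * s - 1 from by
                have := Finset.mem_range.mp hj; omega]
            ring
        _ = (2 * s) • (C (c i) : MvPolynomial (Fin 2) K) ^ (2 * s - 1) + t * (u i * W i) := by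
            rw [Finset.sum_add_distrib, Finset.sum_const, Finset.card_range, ← Finset.mul_sum,
              hWdef]
            rw [show ∀ a b : MvPolynomial (Fin 2) K, (t * a) * b = t * (a * b) from
              fun a b => by ring]
    have hstep2 : g * t ^ (2 * s - 1) = t * (∑ i, u i ^ 2 * W i) := by
      rw [hstep1']
      calc (∑ i, Pg i * u i)
          = ∑ i, ((2 * s) • ((C (c i) : MvPolynomial (Fin 2) K) ^ (2 * s - 1) * u i)
              + t * (u i ^ 2 * W i)) := by
            refine Finset.sum_congr rfl (fun i _ => ?_)
            rw [hPg2 i, add_mul, smul_mul_assoc]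
            congr 1
            ring
        _ = (2 * s) • (∑ i, (C (c i) : MvPolynomial (Fin 2) K) ^ (2 * s - 1) * u i)
            + t * ∑ i, u i ^ 2 * W i := by
            rw [Finset.sum_add_distrib, Finset.smul_sum, Finset.mul_sum]
        _ = t * ∑ i, u i ^ 2 * W i := by
            rw [← hS1def, hS1, smul_zero, zero_add]
    have hstep2' : g * t ^ (2 * s - 2) = ∑ i, u i ^ 2 * W i := by
      apply mul_left_cancel₀ ht0
      calc t * (g * t ^ (2 * s - 2)) = g * t ^ (2 * s - 2 + 1) := by rw [pow_succ]; ring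
        _ = g * t ^ (2 * s - 1) := by rw [show 2 * s - 2 + 1 = 2 * s - 1 from by omega]
        _ = t * ∑ i, u i ^ 2 * W i := hstep2
    have hφ2 := congrArg φ hstep2'
    rw [map_mul, map_pow, hφt, zero_pow (show 2 * s - 2 ≠ 0 by omega), mul_zero,
      map_sum] at hφ2
    have hφRg : ∀ i j, φ (Rg i j) = j • (Polynomial.C (c i)) ^ (j - 1) := by
      intro i j
      calc φ (Rg i j) = ∑ l ∈ Finset.range j, (Polynomial.C (c i)) ^ (j - 1) := by
            simp only [hRgdef, map_sum]
            refine Finset.sum_congr rfl (fun l hl => ?_)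
            rw [map_mul, map_pow, map_pow, hfc i, hφdef, phi_C, ← pow_add,
              show l + (j - 1 - l) = j - 1 from by
                have := Finset.mem_range.mp hl; omega]
        _ = j • (Polynomial.C (c i)) ^ (j - 1) := by
            rw [Finset.sum_const, Finset.card_range]
    set N := ∑ j ∈ Finset.range (2 * s), j with hNdef
    have hφW : ∀ i, φ (W i) = N • (Polynomial.C (c i)) ^ (2 * s - 2) := by
      intro i
      calc φ (W i) = ∑ j ∈ Finset.range (2 * s), j • (Polynomial.C (c i)) ^ (2 * s - 2) := by
            simp only [hWdef, map_sum]
            refine Finset.sum_congr rfl (fun j hj => ?_)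
            rw [map_mul, map_pow, hφRg i j, hφdef, phi_C]
            rcases Nat.eq_zero_or_pos j with rfl | hj1
            · simp
            · rw [smul_mul_assoc, ← pow_add,
                show j - 1 + (2 * s - 1 - j) = 2 * s - 2 from by
                  have := Finset.mem_range.mp hj; omega]
        _ = N • (Polynomial.C (c i)) ^ (2 * s - 2) := by
            rw [hNdef, Finset.sum_smul]
    have hN0 : N ≠ 0 := by
      intro h
      have h1 := (Finset.sum_eq_zero_iff).mp (hNdef ▸ h) 1 (Finset.mem_range.mpr (by omega))
      omega
    have hsos2 : (∑ i, ((Polynomial.C (c i)) ^ (s - 1) * φ (u i)) ^ 2) = 0 := by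
      have h3 : (0 : Polynomial K)
          = N • ∑ i, ((Polynomial.C (c i)) ^ (s - 1) * φ (u i)) ^ 2 := by
        calc (0 : Polynomial K) = ∑ i, φ (u i ^ 2 * W i) := hφ2
          _ = ∑ i, N • (((Polynomial.C (c i)) ^ (s - 1) * φ (u i)) ^ 2) := by
              refine Finset.sum_congr rfl (fun i _ => ?_)
              rw [map_mul, map_pow, hφW i, mul_pow, ← pow_mul,
                show (s - 1) * 2 = 2 * s - 2 from by omega, mul_comm, smul_mul_assoc]
          _ = N • ∑ i, ((Polynomial.C (c i)) ^ (s - 1) * φ (u i)) ^ 2 :=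
              (Finset.smul_sum).symm
      have h4 : ((N : ℕ) : Polynomial K)
          * (∑ i, ((Polynomial.C (c i)) ^ (s - 1) * φ (u i)) ^ 2) = 0 := by
        rw [← nsmul_eq_mul, ← h3]
      rcases mul_eq_zero.mp h4 with h5 | h5
      · exfalso
        rw [← map_natCast (Polynomial.C : K →+* Polynomial K)] at h5
        exact hnatK N (by omega) (Polynomial.C_eq_zero.mp h5)
      · exact h5
    have hu0 : ∀ i, c i ≠ 0 → u i = 0 := by
      intro i hci
      have hd := hsosP (m + 1) _ hsos2 i
      have hφui : φ (u i) = 0 := by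
        rcases mul_eq_zero.mp hd with h | h
        · exact absurd h (pow_ne_zero _ (fun hh => hci (Polynomial.C_eq_zero.mp hh)))
        · exact h
      exact eq_zero_of_tdvd K r hr _ (dvd_of_phi_zero K r _ (hφdef ▸ hφui)) (hdu i)
    -- conclusion
    have hsq : ∀ i, f i ^ (2 * s)
        = (C (c i) : MvPolynomial (Fin 2) K) ^ (2 * s) + t ^ (2 * s) * u i ^ (2 * s) := by
      intro i
      rcases eq_or_ne (c i) 0 with h | h
      · rw [hfu i, h, map_zero, add_zero, mul_pow,
          zero_pow (show 2 * s ≠ 0 by omega), zero_add]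
      · rw [hfu i, hu0 i h, mul_zero, zero_add, zero_pow (show 2 * s ≠ 0 by omega),
          mul_zero, add_zero]
    have hfinal : g = ∑ i, u i ^ (2 * s) := by
      have h6 : (1 : MvPolynomial (Fin 2) K) + t ^ (2 * s) * (∑ i, u i ^ (2 * s))
          = 1 + t ^ (2 * s) * g := by
        calc (1 : MvPolynomial (Fin 2) K) + t ^ (2 * s) * (∑ i, u i ^ (2 * s))
            = ∑ i, ((C (c i) : MvPolynomial (Fin 2) K) ^ (2 * s)
                + t ^ (2 * s) * u i ^ (2 * s)) := by
              rw [Finset.sum_add_distrib, hsumCc, ← Finset.mul_sum]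
          _ = ∑ i, f i ^ (2 * s) := Finset.sum_congr rfl (fun i _ => (hsq i).symm)
          _ = g * t ^ (2 * s) + 1 := hf.symm
          _ = 1 + t ^ (2 * s) * g := by ring
      have h7 := add_left_cancel h6
      exact (mul_left_cancel₀ (pow_ne_zero _ ht0) h7).symm
    obtain ⟨i₀, hi₀⟩ : ∃ i, c i ≠ 0 := by
      by_contra hcon
      push_neg at hcon
      rw [Finset.sum_eq_zero (fun i _ => by
        rw [hcon i, zero_pow (show 2 * s ≠ 0 by omega)])] at hsumc
      exact zero_ne_one hsumc
    apply hgk'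
    refine ⟨fun j => u (i₀.succAbove j), ?_⟩
    rw [hfinal, Fin.sum_univ_succAbove _ i₀, hu0 i₀ hi₀,
      zero_pow (show 2 * s ≠ 0 by omega), zero_add]
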